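/- Let U = conv{z^1, …, z^N} ⊆ ℝ^L and consider the two-stage robust LP P with d = 0: min_{x,y(·)} max_{z∈U} c(z)ᵀx subject to A(z)x + B y(z) ≤ r(z) for all z ∈ U. Let OPT be its optimal worst-case value and let z̄ be any point in the relative interior of U. Suppose (x̄, ȳ^1, …, ȳ^N) is optimal to the LP: min c(z̄)ᵀx subject to c(z^i)ᵀx ≤ OPT and A(z^i)x + B y^i ≤ r(z^i) for all i = 1,…,N. Then x̄ is Pareto adaptively robustly optimal for P. -/

import Mathlib

open Matrix

section

variable {nx ny m L N : ℕ}

/-- Feasibility of `(x, y(·))` for the two-stage robust LP. -/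
def TwoStageFeasible (A : (Fin L → ℝ) →ᵃ[ℝ] Matrix (Fin m) (Fin nx) ℝ)
    (B : Matrix (Fin m) (Fin ny) ℝ) (r : (Fin L → ℝ) →ᵃ[ℝ] (Fin m → ℝ))
    (U : Set (Fin L → ℝ)) (x : Fin nx → ℝ) (y : (Fin L → ℝ) → (Fin ny → ℝ)) : Prop :=
  ∀ z ∈ U, ∀ i, (A z).mulVec x i + B.mulVec (y z) i ≤ r z i

/-- With `d = 0`: `x` admits a feasible rule and is worst-case optimal. -/
def IsAROx (c : (Fin L → ℝ) →ᵃ[ℝ] (Fin nx → ℝ))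
    (A : (Fin L → ℝ) →ᵃ[ℝ] Matrix (Fin m) (Fin nx) ℝ) (B : Matrix (Fin m) (Fin ny) ℝ)
    (r : (Fin L → ℝ) →ᵃ[ℝ] (Fin m → ℝ)) (U : Set (Fin L → ℝ)) (x : Fin nx → ℝ) : Prop :=
  (∃ y, TwoStageFeasible A B r U x y) ∧
    ∀ x', (∃ y', TwoStageFeasible A B r U x' y') →
      (⨆ z : U, c z ⬝ᵥ x) ≤ (⨆ z : U, c z ⬝ᵥ x')

/-- Pareto adaptive robust optimality of `x` (objective independent of `y`). -/
def IsPAROx (c : (Fin L → ℝ) →ᵃ[ℝ] (Fin nx → ℝ))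
    (A : (Fin L → ℝ) →ᵃ[ℝ] Matrix (Fin m) (Fin nx) ℝ) (B : Matrix (Fin m) (Fin ny) ℝ)
    (r : (Fin L → ℝ) →ᵃ[ℝ] (Fin m → ℝ)) (U : Set (Fin L → ℝ)) (x : Fin nx → ℝ) : Prop :=
  IsAROx c A B r U x ∧
    ¬ ∃ xbar, IsAROx c A B r U xbar ∧
      (∀ z ∈ U, c z ⬝ᵥ xbar ≤ c z ⬝ᵥ x) ∧ ∃ z ∈ U, c z ⬝ᵥ xbar < c z ⬝ᵥ x

/-- Convex combination representation of a point of `conv(range zpts)`. -/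
lemma combo_of_mem_hull {zpts : Fin N → (Fin L → ℝ)} {z : Fin L → ℝ}
    (hz : z ∈ convexHull ℝ (Set.range zpts)) :
    ∃ w : Fin N → ℝ, (∀ i, 0 ≤ w i) ∧ ∑ i, w i = 1 ∧ ∑ i, w i • zpts i = z := by
  classical
  rw [convexHull_range_eq_exists_affineCombination] at hz
  obtain ⟨s, w, hw0, hw1, hx⟩ := hz
  refine ⟨fun i => if i ∈ s then w i else 0, ?_, ?_, ?_⟩
  · intro i
    by_cases h : i ∈ s <;> simp [h, hw0 i]
  · rw [Finset.sum_ite_mem, Finset.univ_inter]; exact hw1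
  · have : (∑ i, (if i ∈ s then w i else 0) • zpts i)
        = ∑ i ∈ s, w i • zpts i := by
      calc ∑ i, (if i ∈ s then w i else 0) • zpts i
          = ∑ i, (if i ∈ s then w i • zpts i else 0) := by
            congr 1; funext i; by_cases h : i ∈ s <;> simp [h]
        _ = ∑ i ∈ s, w i • zpts i := by rw [Finset.sum_ite_mem, Finset.univ_inter]
    rw [this, ← Finset.affineCombination_eq_linear_combination s zpts w hw1]
    exact hx

/-- An affine map applied to an affine combination. -/
lemma affine_combo {V : Type*} [AddCommGroup V] [Module ℝ V]
    (f : (Fin L → ℝ) →ᵃ[ℝ] V) (w : Fin N → ℝ) (p : Fin N → Fin L → ℝ)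
    (hw : ∑ i, w i = 1) : f (∑ i, w i • p i) = ∑ i, w i • f (p i) := by
  rw [← Finset.affineCombination_eq_linear_combination Finset.univ p w hw,
      Finset.map_affineCombination Finset.univ p w hw f,
      Finset.affineCombination_eq_linear_combination Finset.univ (f ∘ p) w hw]
  rfl

/-- From a relative-interior point one can push past any point of the set. -/
lemma exists_beyond {U : Set (Fin L → ℝ)} {zbar z0 : Fin L → ℝ}
    (hzbar : zbar ∈ intrinsicInterior ℝ U) (hz0 : z0 ∈ U) (hne : z0 ≠ zbar) :
    ∃ z1 ∈ U, ∃ t : ℝ, 0 < t ∧ t < 1 ∧ zbar = AffineMap.lineMap z0 z1 t := by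
  obtain ⟨w, hw, hwz⟩ := mem_intrinsicInterior.mp hzbar
  have hnhds : ((↑) ⁻¹' U : Set (affineSpan ℝ U)) ∈ nhds w :=
    mem_interior_iff_mem_nhds.mp hw
  rw [mem_nhds_subtype] at hnhds
  obtain ⟨s, hs, hsub⟩ := hnhds
  rw [Metric.mem_nhds_iff] at hs
  obtain ⟨ε, hε, hball⟩ := hs
  have hzbarU : zbar ∈ U := intrinsicInterior_subset hzbar
  have hnorm : 0 < ‖zbar - z0‖ := by
    rw [norm_pos_iff]
    intro h
    exact hne ((sub_eq_zero.mp h).symm)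
  set δ : ℝ := ε / (2 * ‖zbar - z0‖) with hδdef
  have hδ : 0 < δ := by positivity
  set z1 : Fin L → ℝ := δ • (zbar - z0) + zbar with hz1def
  have hspan : z1 ∈ affineSpan ℝ U := by
    have h0 : zbar ∈ affineSpan ℝ U := subset_affineSpan ℝ U hzbarU
    have h1 : z0 ∈ affineSpan ℝ U := subset_affineSpan ℝ U hz0
    have := (affineSpan ℝ U).smul_vsub_vadd_mem δ h0 h1 h0
    simpa [vsub_eq_sub] using this
  have hz1U : z1 ∈ U := by
    have hmem : (⟨z1, hspan⟩ : affineSpan ℝ U) ∈ ((↑) ⁻¹' s : Set (affineSpan ℝ U)) := by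
      apply hball
      have : dist z1 zbar < ε := by
        rw [dist_eq_norm]
        have : z1 - zbar = δ • (zbar - z0) := by simp [hz1def]
        rw [this, norm_smul]
        simp only [Real.norm_eq_abs, abs_of_pos hδ]
        rw [hδdef]
        rw [div_mul_eq_mul_div, mul_comm]
        rw [mul_comm (2:ℝ) ‖zbar - z0‖, mul_div_assoc]
        calc ‖zbar - z0‖ * (ε / (‖zbar - z0‖ * 2)) = ε / 2 := by
              field_simp
          _ < ε := by linarith
      simpa [Metric.mem_ball, Subtype.dist_eq, hwz] using this
    exact hsub hmem
  refine ⟨z1, hz1U, 1 / (1 + δ), by positivity, ?_, ?_⟩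
  · rw [div_lt_one (by linarith)]; linarith
  · have hz1sub : z1 - z0 = (1 + δ) • (zbar - z0) := by
      rw [hz1def]; module
    rw [AffineMap.lineMap_apply_module', hz1sub, smul_smul]
    rw [one_div_mul_cancel (by positivity : (1:ℝ) + δ ≠ 0)]
    module

/-- Piecing together vertex recourse decisions into a feasible rule. -/
lemma exists_rule (zpts : Fin N → (Fin L → ℝ))
    (A : (Fin L → ℝ) →ᵃ[ℝ] Matrix (Fin m) (Fin nx) ℝ) (B : Matrix (Fin m) (Fin ny) ℝ)
    (r : (Fin L → ℝ) →ᵃ[ℝ] (Fin m → ℝ)) (x : Fin nx → ℝ) (yv : Fin N → (Fin ny → ℝ))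
    (h : ∀ i k, (A (zpts i)).mulVec x k + B.mulVec (yv i) k ≤ r (zpts i) k) :
    ∃ y, TwoStageFeasible A B r (convexHull ℝ (Set.range zpts)) x y := by
  classical
  choose! w hw0 hw1 hwz using fun z (hz : z ∈ convexHull ℝ (Set.range zpts)) =>
    combo_of_mem_hull hz
  refine ⟨fun z => ∑ i, w z i • yv i, fun z hz k => ?_⟩
  have hAz : A z = ∑ i, w z i • A (zpts i) := by
    conv_lhs => rw [← hwz z hz]
    exact affine_combo A (w z) zpts (hw1 z hz)
  have hrz : r z = ∑ i, w z i • r (zpts i) := by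
    conv_lhs => rw [← hwz z hz]
    exact affine_combo r (w z) zpts (hw1 z hz)
  have h1 : (A z).mulVec x k = ∑ i, w z i * ((A (zpts i)).mulVec x k) := by
    rw [hAz]
    simp only [Matrix.mulVec, dotProduct, Finset.sum_apply, Pi.smul_apply,
      Matrix.sum_apply, Matrix.smul_apply, smul_eq_mul, Finset.sum_mul, Finset.mul_sum]
    rw [Finset.sum_comm]
    congr 1; funext i; congr 1; funext j; ring
  have h2 : B.mulVec (∑ i, w z i • yv i) k = ∑ i, w z i * B.mulVec (yv i) k := by
    simp only [Matrix.mulVec, dotProduct, Finset.sum_apply, Pi.smul_apply,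
      smul_eq_mul, Finset.mul_sum]
    rw [Finset.sum_comm]
    congr 1; funext i
    congr 1; funext j
    ring
  have h3 : r z k = ∑ i, w z i * r (zpts i) k := by
    rw [hrz]; simp [Finset.sum_apply]
  rw [h1, h2, h3, ← Finset.sum_add_distrib]
  refine Finset.sum_le_sum fun i _ => ?_
  have hi := h i k
  have hwi := hw0 z hz i
  nlinarith

/-- With `U = conv{z^1,…,z^N}` and `d = 0`: if `(x̄, ȳ^1, …, ȳ^N)` is optimal
to the LP `min c(z̄)ᵀx  s.t.  c(z^i)ᵀx ≤ OPT, A(z^i)x + B y^i ≤ r(z^i) ∀i`,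
where `z̄` is any relative-interior point of `U` and `OPT` is the optimal
worst-case value, then `x̄` is Pareto adaptively robustly optimal. -/
theorem stmt16
    (zpts : Fin N → (Fin L → ℝ))
    (c : (Fin L → ℝ) →ᵃ[ℝ] (Fin nx → ℝ))
    (A : (Fin L → ℝ) →ᵃ[ℝ] Matrix (Fin m) (Fin nx) ℝ) (B : Matrix (Fin m) (Fin ny) ℝ)
    (r : (Fin L → ℝ) →ᵃ[ℝ] (Fin m → ℝ))
    (U : Set (Fin L → ℝ)) (hUdef : U = convexHull ℝ (Set.range zpts))
    (OPT : ℝ)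
    (hOPT : IsLeast ((fun x => ⨆ z : U, c z ⬝ᵥ x) ''
      {x : Fin nx → ℝ | ∃ y, TwoStageFeasible A B r U x y}) OPT)
    (zbar : Fin L → ℝ) (hzbar : zbar ∈ intrinsicInterior ℝ U)
    (xbar : Fin nx → ℝ) (ybar : Fin N → (Fin ny → ℝ))
    (hfeas : ∀ i : Fin N, c (zpts i) ⬝ᵥ xbar ≤ OPT ∧
      ∀ k, (A (zpts i)).mulVec xbar k + B.mulVec (ybar i) k ≤ r (zpts i) k)
    (hopt : ∀ (x' : Fin nx → ℝ) (y' : Fin N → (Fin ny → ℝ)),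
      (∀ i : Fin N, c (zpts i) ⬝ᵥ x' ≤ OPT ∧
        ∀ k, (A (zpts i)).mulVec x' k + B.mulVec (y' i) k ≤ r (zpts i) k) →
      c zbar ⬝ᵥ xbar ≤ c zbar ⬝ᵥ x') :
    IsPAROx c A B r U xbar := by
  classical
  subst hUdef
  set U := convexHull ℝ (Set.range zpts) with hUdef
  have hzbarU : zbar ∈ U := intrinsicInterior_subset hzbar
  haveI hne : Nonempty ↥U := ⟨⟨zbar, hzbarU⟩⟩
  have hvert : ∀ i, zpts i ∈ U := fun i => subset_convexHull ℝ _ (Set.mem_range_self i)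
  -- bound an affine objective on the hull by its values at the vertices
  have key : ∀ (x : Fin nx → ℝ) (t : ℝ), (∀ i, c (zpts i) ⬝ᵥ x ≤ t) →
      ∀ z ∈ U, c z ⬝ᵥ x ≤ t := by
    intro x t ht z hz
    obtain ⟨w, hw0, hw1, hwz⟩ := combo_of_mem_hull hz
    have hcz : c z = ∑ i, w i • c (zpts i) := by
      conv_lhs => rw [← hwz]
      exact affine_combo c w zpts hw1
    have hdot : c z ⬝ᵥ x = ∑ i, w i * (c (zpts i) ⬝ᵥ x) := by
      rw [hcz]
      simp only [dotProduct, Finset.sum_apply, Pi.smul_apply, smul_eq_mul,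
        Finset.sum_mul, Finset.mul_sum]
      rw [Finset.sum_comm]
      congr 1; funext i; congr 1; funext j; ring
    rw [hdot]
    calc ∑ i, w i * (c (zpts i) ⬝ᵥ x) ≤ ∑ i, w i * t :=
          Finset.sum_le_sum fun i _ => mul_le_mul_of_nonneg_left (ht i) (hw0 i)
      _ = t := by rw [← Finset.sum_mul, hw1, one_mul]
  have hARO : IsAROx c A B r U xbar := by
    constructor
    · exact exists_rule zpts A B r xbar ybar (fun i k => (hfeas i).2 k)
    · intro x' hx'
      have h1 : (⨆ z : U, c z ⬝ᵥ xbar) ≤ OPT :=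
        ciSup_le fun z => key xbar OPT (fun i => (hfeas i).1) z z.2
      have h2 : OPT ≤ ⨆ z : U, c z ⬝ᵥ x' := hOPT.2 (Set.mem_image_of_mem _ hx')
      linarith
  refine ⟨hARO, ?_⟩
  rintro ⟨xs, hxsARO, hdom, z0, hz0U, hz0strict⟩
  obtain ⟨ys, hys⟩ := hxsARO.1
  have hvfeas : ∀ i : Fin N, c (zpts i) ⬝ᵥ xs ≤ OPT ∧
      ∀ k, (A (zpts i)).mulVec xs k + B.mulVec (ys (zpts i)) k ≤ r (zpts i) k :=
    fun i => ⟨le_trans (hdom _ (hvert i)) (hfeas i).1, fun k => hys _ (hvert i) k⟩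
  have hle : c zbar ⬝ᵥ xbar ≤ c zbar ⬝ᵥ xs := hopt xs (fun i => ys (zpts i)) hvfeas
  have heq : c zbar ⬝ᵥ xs = c zbar ⬝ᵥ xbar := le_antisymm (hdom zbar hzbarU) hle
  by_cases hz0eq : z0 = zbar
  · subst hz0eq
    exact absurd heq (ne_of_lt hz0strict)
  · obtain ⟨z1, hz1U, t, ht0, ht1, hline⟩ := exists_beyond hzbar hz0U hz0eq
    have hgeo : c zbar = AffineMap.lineMap (c z0) (c z1) t := by
      rw [hline, AffineMap.apply_lineMap]
    have expand : ∀ v, c zbar ⬝ᵥ v = t * (c z1 ⬝ᵥ v) + (1 - t) * (c z0 ⬝ᵥ v) := by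
      intro v
      rw [hgeo, AffineMap.lineMap_apply_module]
      rw [add_dotProduct, smul_dotProduct, smul_dotProduct]
      simp only [smul_eq_mul]
      ring
    have h1 : c z1 ⬝ᵥ xs ≤ c z1 ⬝ᵥ xbar := hdom z1 hz1U
    have h0 : c z0 ⬝ᵥ xs < c z0 ⬝ᵥ xbar := hz0strict
    have e1 := expand xs
    have e2 := expand xbar
    nlinarith
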